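/- Let z : [0,∞) → ℝ_+^I be a fluid model solution (continuous, ‖z(t)‖_1 bounded away from 0 on [δ,∞) for each δ>0, satisfying the multistage PS fluid ODEs). If z(0) ≠ 0, then z is the unique such solution with that initial state; uniqueness follows since the vector field (λ − μ_1 z_1/‖z‖_1 − ν z_1, ..., μ_{I-1}z_{I-1}/‖z‖_1 − μ_I z_I/‖z‖_1 − ν z_I) is Lipschitz continuous on {z ∈ ℝ_+^I : ‖z‖_1 ≥ a} for each a > 0. -/

import Mathlib

open Set

/-- A fluid model solution of the multistage PS fluid model: continuous on `[0,∞)`,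
nonnegative, with `‖z(t)‖₁` bounded away from `0` on `[δ,∞)` for each `δ > 0`, and
satisfying the fluid ODEs `z_1' = λ − μ_1 z_1/‖z‖₁ − ν z_1`,
`z_i' = μ_{i-1} z_{i-1}/‖z‖₁ − μ_i z_i/‖z‖₁ − ν z_i` on `(0,∞)` (`0`-based indices). -/
def IsFMS (n : ℕ) (lam ν : ℝ) (μ : Fin (n + 1) → ℝ) (z : ℝ → Fin (n + 1) → ℝ) : Prop :=
  (∀ i, ContinuousOn (fun t => z t i) (Set.Ici 0)) ∧
  (∀ t ≥ (0 : ℝ), ∀ i, 0 ≤ z t i) ∧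
  (∀ δ > (0 : ℝ), ∃ ε > (0 : ℝ), ∀ t ≥ δ, ε ≤ ∑ i, z t i) ∧
  (∀ t > (0 : ℝ),
    HasDerivAt (fun s => z s 0) (lam - μ 0 * z t 0 / (∑ i, z t i) - ν * z t 0) t) ∧
  (∀ t > (0 : ℝ), ∀ i : Fin (n + 1), i ≠ 0 →
    HasDerivAt (fun s => z s i)
      (μ (i - 1) * z t (i - 1) / (∑ j, z t j) - μ i * z t i / (∑ j, z t j) - ν * z t i) t)

/-- Pointwise Lipschitz-type estimate for `v ↦ v i / ∑ v` on the region where the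
sum is at least `ε` and coordinates lie in `[0, R]`. -/
lemma ratio_lip {m : ℕ} (ε R : ℝ) (hε : 0 < ε) (a b : Fin m → ℝ)
    (hb : ∀ j, 0 ≤ b j) (hbR : ∀ j, b j ≤ R)
    (hsa : ε ≤ ∑ j, a j) (hsb : ε ≤ ∑ j, b j) (i : Fin m) :
    |a i / (∑ j, a j) - b i / (∑ j, b j)| ≤ (1 / ε + R * m / ε ^ 2) * ‖a - b‖ := by
  have hA : (0:ℝ) < ∑ j, a j := lt_of_lt_of_le hε hsa
  have hB : (0:ℝ) < ∑ j, b j := lt_of_lt_of_le hε hsb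
  have hR0 : 0 ≤ R := (hb i).trans (hbR i)
  have hab : ∀ j, |a j - b j| ≤ ‖a - b‖ := fun j => by
    simpa [Real.norm_eq_abs] using norm_le_pi_norm (a - b) j
  have hsum : |(∑ j, b j) - ∑ j, a j| ≤ m * ‖a - b‖ := by
    calc |(∑ j, b j) - ∑ j, a j| = |∑ j, (b j - a j)| := by rw [Finset.sum_sub_distrib]
      _ ≤ ∑ j, |b j - a j| := Finset.abs_sum_le_sum_abs _ _
      _ ≤ ∑ _j : Fin m, ‖a - b‖ := Finset.sum_le_sum (fun j _ => by
          rw [abs_sub_comm]; exact hab j)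
      _ = m * ‖a - b‖ := by
          simp [Finset.sum_const, Finset.card_univ, nsmul_eq_mul]
  have key : a i / (∑ j, a j) - b i / (∑ j, b j)
      = (a i - b i) / (∑ j, a j)
        + b i * ((∑ j, b j) - (∑ j, a j)) / ((∑ j, a j) * (∑ j, b j)) := by
    field_simp
    ring
  rw [key]
  have h1 : |(a i - b i) / (∑ j, a j)| ≤ ‖a - b‖ / ε := by
    rw [abs_div, abs_of_pos hA]
    exact div_le_div₀ (norm_nonneg _) (hab i) hε hsa
  have h2 : |b i * ((∑ j, b j) - (∑ j, a j)) / ((∑ j, a j) * (∑ j, b j))|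
      ≤ R * (m * ‖a - b‖) / (ε * ε) := by
    rw [abs_div, abs_of_pos (mul_pos hA hB), abs_mul]
    refine div_le_div₀ (mul_nonneg hR0 (mul_nonneg (by positivity) (norm_nonneg _)))
      ?_ (mul_pos hε hε) (mul_le_mul hsa hsb hε.le hA.le)
    rw [abs_of_nonneg (hb i)]
    exact mul_le_mul (hbR i) hsum (abs_nonneg _) hR0
  calc |(a i - b i) / (∑ j, a j)
        + b i * ((∑ j, b j) - (∑ j, a j)) / ((∑ j, a j) * (∑ j, b j))|
      ≤ _ + _ := abs_add_le _ _
    _ ≤ ‖a - b‖ / ε + R * (m * ‖a - b‖) / (ε * ε) := add_le_add h1 h2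
    _ = (1 / ε + R * m / ε ^ 2) * ‖a - b‖ := by field_simp

set_option maxHeartbeats 1000000 in
/-- a fluid model solution with nonzero initial state is unique (two FMS's
with the same nonzero initial state coincide on `[0,∞)`). -/
theorem fms_unique_nonzero_initial (n : ℕ) (lam ν : ℝ) (hlam : 0 < lam) (hν : 0 < ν)
    (μ : Fin (n + 1) → ℝ) (hμ : ∀ i, 0 < μ i)
    (z w : ℝ → Fin (n + 1) → ℝ)
    (hz : IsFMS n lam ν μ z) (hw : IsFMS n lam ν μ w)
    (hinit : ∀ i, z 0 i = w 0 i) (hne : ∃ i, z 0 i ≠ 0) :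
    ∀ t ≥ (0 : ℝ), ∀ i, z t i = w t i := by
  obtain ⟨hzc, hznn, hzeps, hz0, hzi⟩ := hz
  obtain ⟨hwc, hwnn, hweps, hw0, hwi⟩ := hw
  intro t ht i
  rcases eq_or_lt_of_le ht with h0 | h0
  · rw [← h0]; exact hinit i
  -- positivity of the initial total mass
  obtain ⟨i0, hi0⟩ := hne
  have hz0pos : 0 < ∑ j, z 0 j :=
    Finset.sum_pos' (fun j _ => hznn 0 le_rfl j)
      ⟨i0, Finset.mem_univ _, (hznn 0 le_rfl i0).lt_of_ne (Ne.symm hi0)⟩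
  have hw0sum : (∑ j, w 0 j) = ∑ j, z 0 j := by
    apply Finset.sum_congr rfl; intro j _; rw [hinit j]
  -- continuity of the sums
  have hSzc : ContinuousOn (fun s => ∑ j, z s j) (Ici (0:ℝ)) :=
    continuousOn_finset_sum _ (fun j _ => hzc j)
  have hSwc : ContinuousOn (fun s => ∑ j, w s j) (Ici (0:ℝ)) :=
    continuousOn_finset_sum _ (fun j _ => hwc j)
  -- lower bound near 0
  have Ez : ∀ᶠ s in nhdsWithin 0 (Ici (0:ℝ)), (∑ j, z 0 j) / 2 < ∑ j, z s j :=
    (hSzc 0 self_mem_Ici).eventually (eventually_gt_nhds (by linarith))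
  have hw0half : (∑ j, z 0 j) / 2 < ∑ j, w 0 j := by rw [hw0sum]; linarith
  have Ew : ∀ᶠ s in nhdsWithin 0 (Ici (0:ℝ)), (∑ j, z 0 j) / 2 < ∑ j, w s j :=
    (hSwc 0 self_mem_Ici).eventually (eventually_gt_nhds hw0half)
  obtain ⟨r, hr0, hball⟩ := Metric.mem_nhdsWithin_iff.1 (Ez.and Ew)
  set δ0 : ℝ := r / 2 with hδ0def
  have hδ0 : 0 < δ0 := by positivity
  have hnear : ∀ s ∈ Icc (0:ℝ) δ0,
      (∑ j, z 0 j) / 2 < (∑ j, z s j) ∧ (∑ j, z 0 j) / 2 < ∑ j, w s j := by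
    intro s hs
    refine hball ⟨?_, hs.1⟩
    rw [Metric.mem_ball, Real.dist_eq, abs_of_nonneg (by linarith [hs.1])]
    have := hs.2
    simp only [hδ0def] at this
    linarith
  -- lower bound away from 0
  obtain ⟨ε1, hε1, hε1z⟩ := hzeps δ0 hδ0
  obtain ⟨ε2, hε2, hε2w⟩ := hweps δ0 hδ0
  set ε : ℝ := min (min ε1 ε2) ((∑ j, z 0 j) / 2) with hεdef
  have hεpos : 0 < ε := lt_min (lt_min hε1 hε2) (by linarith)
  have hSz : ∀ s ∈ Icc (0:ℝ) t, ε ≤ ∑ j, z s j := by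
    intro s hs
    rcases le_or_gt s δ0 with h | h
    · exact le_trans (min_le_right _ _) (hnear s ⟨hs.1, h⟩).1.le
    · exact le_trans (le_trans (min_le_left _ _) (min_le_left _ _)) (hε1z s h.le)
  have hSw : ∀ s ∈ Icc (0:ℝ) t, ε ≤ ∑ j, w s j := by
    intro s hs
    rcases le_or_gt s δ0 with h | h
    · exact le_trans (min_le_right _ _) (hnear s ⟨hs.1, h⟩).2.le
    · exact le_trans (le_trans (min_le_left _ _) (min_le_right _ _)) (hε2w s h.le)
  -- global bound R on [0, t]
  have hzC : ContinuousOn (fun s => z s) (Ici (0:ℝ)) := continuousOn_pi.2 hzc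
  have hwC : ContinuousOn (fun s => w s) (Ici (0:ℝ)) := continuousOn_pi.2 hwc
  have hIcc : Icc (0:ℝ) t ⊆ Ici 0 := fun x hx => hx.1
  obtain ⟨C, hC⟩ := (isCompact_Icc (a := (0:ℝ)) (b := t)).exists_bound_of_continuousOn
    ((hzC.mono hIcc).prodMk (hwC.mono hIcc))
  set R : ℝ := max C 0 with hRdef
  have hR0 : 0 ≤ R := le_max_right _ _
  have hzR : ∀ s ∈ Icc (0:ℝ) t, ∀ j, z s j ≤ R := by
    intro s hs j
    have h := (norm_le_pi_norm (z s) j).trans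
      ((norm_fst_le ((z s, w s))).trans ((hC s hs).trans (le_max_left C 0)))
    calc z s j ≤ |z s j| := le_abs_self _
      _ ≤ R := by rw [← Real.norm_eq_abs]; exact h
  have hwR : ∀ s ∈ Icc (0:ℝ) t, ∀ j, w s j ≤ R := by
    intro s hs j
    have h := (norm_le_pi_norm (w s) j).trans
      ((norm_snd_le ((z s, w s))).trans ((hC s hs).trans (le_max_left C 0)))
    calc w s j ≤ |w s j| := le_abs_self _
      _ ≤ R := by rw [← Real.norm_eq_abs]; exact h
  -- constants
  set M : ℝ := ∑ j, μ j with hMdef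
  have hμM : ∀ j, μ j ≤ M := fun j =>
    Finset.single_le_sum (fun k _ => (hμ k).le) (Finset.mem_univ j)
  have hM0 : 0 < M := Finset.sum_pos (fun k _ => hμ k) Finset.univ_nonempty
  set C₁ : ℝ := 1 / ε + R * (n+1) / ε ^ 2 with hC₁def
  have hC₁0 : 0 ≤ C₁ := by positivity
  set K : ℝ := 2 * M * C₁ + ν with hKdef
  have hK0 : 0 < K := by positivity
  -- the difference function and its derivative
  set f : ℝ → Fin (n+1) → ℝ := fun s => z s - w s with hfdef
  set f' : ℝ → Fin (n+1) → ℝ := fun s j =>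
    (if j = 0 then lam - μ 0 * z s 0 / (∑ k, z s k) - ν * z s 0
      else μ (j - 1) * z s (j - 1) / (∑ k, z s k) - μ j * z s j / (∑ k, z s k) - ν * z s j)
    - (if j = 0 then lam - μ 0 * w s 0 / (∑ k, w s k) - ν * w s 0
      else μ (j - 1) * w s (j - 1) / (∑ k, w s k) - μ j * w s j / (∑ k, w s k) - ν * w s j)
    with hf'def
  have hf0 : f 0 = 0 := by funext j; simp [hfdef, hinit j]
  have hfC : ContinuousOn f (Ici (0:ℝ)) := hzC.sub hwC
  have hderiv : ∀ s, 0 < s → HasDerivAt f (f' s) s := by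
    intro s hs
    rw [hasDerivAt_pi]
    intro j
    by_cases hj : j = 0
    · subst hj
      simp only [hf'def, eq_self_iff_true, if_true]
      exact (hz0 s hs).sub (hw0 s hs)
    · simp only [hf'def, if_neg hj]
      exact (hzi s hs j hj).sub (hwi s hs j hj)
  -- norm bound on the derivative
  have hfab : ∀ s, ∀ j, |z s j - w s j| ≤ ‖f s‖ := fun s j => by
    simpa [hfdef, Real.norm_eq_abs] using norm_le_pi_norm (z s - w s) j
  have hbound : ∀ s ∈ Icc (0:ℝ) t, ‖f' s‖ ≤ K * ‖f s‖ := by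
    intro s hs
    have hF0 : 0 ≤ ‖f s‖ := norm_nonneg _
    rw [pi_norm_le_iff_of_nonneg (mul_nonneg hK0.le hF0)]
    intro j
    rw [Real.norm_eq_abs]
    have hlip : ∀ k : Fin (n+1), |z s k / (∑ l, z s l) - w s k / (∑ l, w s l)|
        ≤ C₁ * ‖f s‖ := by
      intro k
      have := ratio_lip ε R hεpos (z s) (w s) (fun l => hwnn s hs.1 l)
        (fun l => hwR s hs l) (hSz s hs) (hSw s hs) k
      simpa [hC₁def, hfdef] using this
    by_cases hj : j = 0
    · subst hj
      simp only [hf'def, eq_self_iff_true, if_true]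
      have key : (lam - μ 0 * z s 0 / (∑ k, z s k) - ν * z s 0)
          - (lam - μ 0 * w s 0 / (∑ k, w s k) - ν * w s 0)
          = -(μ 0 * (z s 0 / (∑ k, z s k) - w s 0 / (∑ k, w s k))) - ν * (z s 0 - w s 0) := by
        ring
      rw [key]
      have h1 : |(-(μ 0 * (z s 0 / (∑ k, z s k) - w s 0 / (∑ k, w s k)))) - ν * (z s 0 - w s 0)|
          ≤ μ 0 * (C₁ * ‖f s‖) + ν * ‖f s‖ := by
        refine le_trans (abs_sub _ _) (add_le_add ?_ ?_)
        · rw [abs_neg, abs_mul, abs_of_pos (hμ 0)]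
          exact mul_le_mul_of_nonneg_left (hlip 0) (hμ 0).le
        · rw [abs_mul, abs_of_pos hν]
          exact mul_le_mul_of_nonneg_left (hfab s 0) hν.le
      refine h1.trans ?_
      have h2 : μ 0 * (C₁ * ‖f s‖) ≤ M * (C₁ * ‖f s‖) :=
        mul_le_mul_of_nonneg_right (hμM 0) (mul_nonneg hC₁0 hF0)
      have h3 : 0 ≤ M * (C₁ * ‖f s‖) := mul_nonneg hM0.le (mul_nonneg hC₁0 hF0)
      rw [hKdef]; nlinarith
    · simp only [hf'def, if_neg hj]
      have key : (μ (j-1) * z s (j-1) / (∑ k, z s k) - μ j * z s j / (∑ k, z s k) - ν * z s j)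
          - (μ (j-1) * w s (j-1) / (∑ k, w s k) - μ j * w s j / (∑ k, w s k) - ν * w s j)
          = μ (j-1) * (z s (j-1) / (∑ k, z s k) - w s (j-1) / (∑ k, w s k))
            - μ j * (z s j / (∑ k, z s k) - w s j / (∑ k, w s k))
            - ν * (z s j - w s j) := by
        ring
      rw [key]
      have h1 : |μ (j-1) * (z s (j-1) / (∑ k, z s k) - w s (j-1) / (∑ k, w s k))
            - μ j * (z s j / (∑ k, z s k) - w s j / (∑ k, w s k))
            - ν * (z s j - w s j)|
          ≤ (μ (j-1) * (C₁ * ‖f s‖) + μ j * (C₁ * ‖f s‖)) + ν * ‖f s‖ := by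
        refine le_trans (abs_sub _ _) (add_le_add (le_trans (abs_sub _ _) (add_le_add ?_ ?_)) ?_)
        · rw [abs_mul, abs_of_pos (hμ _)]
          exact mul_le_mul_of_nonneg_left (hlip (j-1)) (hμ _).le
        · rw [abs_mul, abs_of_pos (hμ _)]
          exact mul_le_mul_of_nonneg_left (hlip j) (hμ _).le
        · rw [abs_mul, abs_of_pos hν]
          exact mul_le_mul_of_nonneg_left (hfab s j) hν.le
      refine h1.trans ?_
      have h2 : μ (j-1) * (C₁ * ‖f s‖) ≤ M * (C₁ * ‖f s‖) :=
        mul_le_mul_of_nonneg_right (hμM _) (mul_nonneg hC₁0 hF0)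
      have h3 : μ j * (C₁ * ‖f s‖) ≤ M * (C₁ * ‖f s‖) :=
        mul_le_mul_of_nonneg_right (hμM _) (mul_nonneg hC₁0 hF0)
      rw [hKdef]; nlinarith
  -- conclude ‖f t‖ = 0 via Grönwall, letting the starting time tend to 0
  have hft : ∀ c > (0:ℝ), ‖f t‖ ≤ c := by
    intro c hc
    have hexp : 0 < Real.exp (K * t) := Real.exp_pos _
    have hc' : 0 < c / Real.exp (K * t) := by positivity
    have htd : Filter.Tendsto (fun s => ‖f s‖) (nhdsWithin 0 (Ioi (0:ℝ))) (nhds 0) := by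
      have h : Filter.Tendsto (fun s => ‖f s‖) (nhdsWithin 0 (Ioi (0:ℝ))) (nhds ‖f 0‖) :=
        ((hfC 0 self_mem_Ici).mono (Ioi_subset_Ici le_rfl)).norm
      rwa [hf0, norm_zero] at h
    have E1 : ∀ᶠ s in nhdsWithin 0 (Ioi (0:ℝ)), ‖f s‖ < c / Real.exp (K * t) :=
      htd.eventually_lt_const hc'
    have E2 : ∀ᶠ s in nhdsWithin 0 (Ioi (0:ℝ)), s < t :=
      eventually_nhdsWithin_of_eventually_nhds (eventually_lt_nhds h0)
    have E3 : ∀ᶠ s in nhdsWithin 0 (Ioi (0:ℝ)), s ∈ Ioi (0:ℝ) :=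
      eventually_mem_nhdsWithin
    obtain ⟨t0, h1, h2, h3⟩ := (E1.and (E2.and E3)).exists
    have ht0 : 0 < t0 := h3
    have hcont : ContinuousOn f (Icc t0 t) :=
      hfC.mono (fun x hx => le_trans ht0.le hx.1)
    have hder' : ∀ s ∈ Ico t0 t, HasDerivWithinAt f (f' s) (Ici s) s :=
      fun s hs => (hderiv s (lt_of_lt_of_le ht0 hs.1)).hasDerivWithinAt
    have hbd : ∀ s ∈ Ico t0 t, ‖f' s‖ ≤ K * ‖f s‖ + 0 := by
      intro s hs
      rw [add_zero]
      exact hbound s ⟨le_trans ht0.le hs.1, hs.2.le⟩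
    have hg := norm_le_gronwallBound_of_norm_deriv_right_le hcont hder' le_rfl hbd t
      ⟨h2.le, le_rfl⟩
    rw [gronwallBound_ε0] at hg
    calc ‖f t‖ ≤ ‖f t0‖ * Real.exp (K * (t - t0)) := hg
      _ ≤ (c / Real.exp (K * t)) * Real.exp (K * t) := by
          refine mul_le_mul h1.le (Real.exp_le_exp.2 ?_) (Real.exp_pos _).le hc'.le
          nlinarith
      _ = c := div_mul_cancel₀ _ (ne_of_gt hexp)
  have hft0 : ‖f t‖ ≤ 0 := by
    by_contra h
    push_neg at h
    have := hft (‖f t‖ / 2) (by linarith)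
    linarith
  have : f t = 0 := norm_le_zero_iff.1 hft0
  have := congrFun this i
  simp only [hfdef, Pi.sub_apply, Pi.zero_apply, sub_eq_zero] at this
  exact this
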